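/- arXiv:2308.02701 — 2 statements merged into one kernel-verified Lean document; each statement's English description precedes it below -/
import Mathlib

section
/- Let A be an N×N strongly regular complex matrix with A(i,j) = 0 whenever |i−j| > r (a two-sided band matrix of order r). Then A admits a factorization A = L·R, where L is a unit lower triangular matrix which is lower band of order r and whose inverse factors as L⁻¹ = L̃_{N−r+1}·L̃_{N−r}⋯L̃_1 (product in decreasing order of indices) with embedded factors built from L_k = [[1, 0_{1×r}],[−f_k, I_r]] ∈ ℂ^{(r+1)×(r+1)} for some columns f_k ∈ ℂ^{r×1} (k = 1,…,N−r) and a unit lower triangular L_{N−r+1} ∈ ℂ^{r×r}, and where R is an upper triangular matrix satisfying R(i,j) = 0 whenever j − i > r. -/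
open Matrix

noncomputable section

/-- `A(i,j) = 0` whenever `i - j > r` (1-based; identical in 0-based `Fin` indexing). -/
def IsLowerBand (N r : ℕ) (A : Matrix (Fin N) (Fin N) ℂ) : Prop :=
  ∀ i j : Fin N, (j : ℕ) + r < (i : ℕ) → A i j = 0

/-- `A(i,j) = 0` whenever `j - i > r`. -/
def IsUpperBand (N r : ℕ) (A : Matrix (Fin N) (Fin N) ℂ) : Prop :=
  ∀ i j : Fin N, (i : ℕ) + r < (j : ℕ) → A i j = 0

/-- `rank B(k:N, 1:k+r-1) ≤ r` for every `k = 1, …, N-r` (1-based). -/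
def IsLowerGreen (N r : ℕ) (B : Matrix (Fin N) (Fin N) ℂ) : Prop :=
  ∀ (k : ℕ) (hk1 : 1 ≤ k) (hk2 : k ≤ N - r),
    (B.submatrix
      (fun i : Fin (N - k + 1) => (⟨k - 1 + (i : ℕ), by have := i.isLt; omega⟩ : Fin N))
      (fun j : Fin (k + r - 1) => (⟨(j : ℕ), by have := j.isLt; omega⟩ : Fin N))).rank ≤ r

/-- `rank B(1:k+r-1, k:N) ≤ r` for every `k = 1, …, N-r` (1-based). -/
def IsUpperGreen (N r : ℕ) (B : Matrix (Fin N) (Fin N) ℂ) : Prop :=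
  ∀ (k : ℕ) (hk1 : 1 ≤ k) (hk2 : k ≤ N - r),
    (B.submatrix
      (fun i : Fin (k + r - 1) => (⟨(i : ℕ), by have := i.isLt; omega⟩ : Fin N))
      (fun j : Fin (N - k + 1) => (⟨k - 1 + (j : ℕ), by have := j.isLt; omega⟩ : Fin N))).rank ≤ r

/-- `a^>_{i,s} = a(i-1) a(i-2) ⋯ a(s+1)`, equal to `I_r` when `s ≥ i - 1`. -/
def aGT (r : ℕ) (a : ℕ → Matrix (Fin r) (Fin r) ℂ) (i s : ℕ) :
    Matrix (Fin r) (Fin r) ℂ :=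
  (((List.range' (s + 1) (i - 1 - s)).reverse).map a).prod

/-- `p(i) ∈ ℂ^{1×r}` (i = 1,…,N−r), `pLast = p(N−r+1) ∈ ℂ^{r×r}`, `q(j) ∈ ℂ^{r×1}`,
`a(k) ∈ ℂ^{r×r}` are lower Green generators of the `N×N` matrix `B`:
`B(i,1:r) = p(i)·a^>_{i,0}`, `B(i,r+s-1) = p(i)·a^>_{i,s-1}·q(s-1)` for `2 ≤ s ≤ i ≤ N-r`,
and the analogous identities for the last `r` rows `B(N-r+1:N, ·)` with `pLast`. -/
def IsLowerGreenGenerators (N r : ℕ) (hNr : r < N)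
    (p : ℕ → Matrix (Fin 1) (Fin r) ℂ) (q : ℕ → Matrix (Fin r) (Fin 1) ℂ)
    (a : ℕ → Matrix (Fin r) (Fin r) ℂ) (pLast : Matrix (Fin r) (Fin r) ℂ)
    (B : Matrix (Fin N) (Fin N) ℂ) : Prop :=
  (∀ (i : ℕ) (hi1 : 1 ≤ i) (hi2 : i ≤ N - r) (j : Fin r),
      B ⟨i - 1, by omega⟩ ⟨(j : ℕ), by have := j.isLt; omega⟩ = (p i * aGT r a i 0) 0 j)
  ∧ (∀ (i : ℕ) (hi1 : 1 ≤ i) (hi2 : i ≤ N - r) (s : ℕ) (hs1 : 2 ≤ s) (hs2 : s ≤ i),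
      B ⟨i - 1, by omega⟩ ⟨r + s - 2, by omega⟩
        = (p i * aGT r a i (s - 1) * q (s - 1)) 0 0)
  ∧ (∀ (t : Fin r) (j : Fin r),
      B ⟨N - r + (t : ℕ), by have := t.isLt; omega⟩ ⟨(j : ℕ), by have := j.isLt; omega⟩
        = (pLast * aGT r a (N - r + 1) 0) t j)
  ∧ (∀ (t : Fin r) (s : ℕ) (hs1 : 2 ≤ s) (hs2 : s ≤ N - r + 1),
      B ⟨N - r + (t : ℕ), by have := t.isLt; omega⟩ ⟨r + s - 2, by omega⟩
        = (pLast * aGT r a (N - r + 1) (s - 1) * q (s - 1)) t 0)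

/-- The embedded factor `I_{k-1} ⊕ M ⊕ I_{N-k-r}` (1-based block position `k`),
i.e. `M` occupies (1-based) rows and columns `k, …, k+r` of an `N×N` identity. -/
def embed (N r k : ℕ) (M : Matrix (Fin (r + 1)) (Fin (r + 1)) ℂ) :
    Matrix (Fin N) (Fin N) ℂ :=
  Matrix.of fun i j =>
    if h : k - 1 ≤ (i : ℕ) ∧ (i : ℕ) < k + r ∧ k - 1 ≤ (j : ℕ) ∧ (j : ℕ) < k + r then
      M ⟨(i : ℕ) - (k - 1), by omega⟩ ⟨(j : ℕ) - (k - 1), by omega⟩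
    else if (i : ℕ) = (j : ℕ) then 1 else 0

/-- The embedded last factor `I_{N-r} ⊕ M`. -/
def embedLast (N r : ℕ) (M : Matrix (Fin r) (Fin r) ℂ) : Matrix (Fin N) (Fin N) ℂ :=
  Matrix.of fun i j =>
    if h : N - r ≤ (i : ℕ) ∧ N - r ≤ (j : ℕ) then
      M ⟨(i : ℕ) - (N - r), by have := i.isLt; omega⟩
        ⟨(j : ℕ) - (N - r), by have := j.isLt; omega⟩
    else if (i : ℕ) = (j : ℕ) then 1 else 0

/-- `G̃_1 · G̃_2 ⋯ G̃_{N-r}` (increasing order of indices). -/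
def prodAsc (N r : ℕ) (G : ℕ → Matrix (Fin (r + 1)) (Fin (r + 1)) ℂ) :
    Matrix (Fin N) (Fin N) ℂ :=
  ((List.range' 1 (N - r)).map (fun k => embed N r k (G k))).prod

/-- `G̃_{N-r} · G̃_{N-r-1} ⋯ G̃_1` (decreasing order of indices). -/
def prodDesc (N r : ℕ) (G : ℕ → Matrix (Fin (r + 1)) (Fin (r + 1)) ℂ) :
    Matrix (Fin N) (Fin N) ℂ :=
  (((List.range' 1 (N - r)).reverse).map (fun k => embed N r k (G k))).prod

/-- The `1×r` block `p` of the partition `M = [[p, d], [a, q]]`. -/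
def blkP (r : ℕ) (M : Matrix (Fin (r + 1)) (Fin (r + 1)) ℂ) : Matrix (Fin 1) (Fin r) ℂ :=
  Matrix.of fun _ j => M 0 j.castSucc

/-- The `1×1` block `d` of the partition `M = [[p, d], [a, q]]`. -/
def blkD (r : ℕ) (M : Matrix (Fin (r + 1)) (Fin (r + 1)) ℂ) : ℂ := M 0 (Fin.last r)

/-- The `r×r` block `a` of the partition `M = [[p, d], [a, q]]`. -/
def blkA (r : ℕ) (M : Matrix (Fin (r + 1)) (Fin (r + 1)) ℂ) : Matrix (Fin r) (Fin r) ℂ :=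
  Matrix.of fun i j => M i.succ j.castSucc

/-- The `r×1` block `q` of the partition `M = [[p, d], [a, q]]`. -/
def blkQ (r : ℕ) (M : Matrix (Fin (r + 1)) (Fin (r + 1)) ℂ) : Matrix (Fin r) (Fin 1) ℂ :=
  Matrix.of fun i _ => M i.succ (Fin.last r)

/-- Assemble the `(r+1)×(r+1)` matrix `[[p, d], [a, q]]` from its blocks. -/
def mkBlk (r : ℕ) (p : Matrix (Fin 1) (Fin r) ℂ) (d : ℂ)
    (a : Matrix (Fin r) (Fin r) ℂ) (q : Matrix (Fin r) (Fin 1) ℂ) :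
    Matrix (Fin (r + 1)) (Fin (r + 1)) ℂ :=
  Matrix.of fun i j =>
    if hi : (i : ℕ) = 0 then
      if hj : (j : ℕ) < r then p 0 ⟨(j : ℕ), hj⟩ else d
    else
      if hj : (j : ℕ) < r then a ⟨(i : ℕ) - 1, by have := i.isLt; omega⟩ ⟨(j : ℕ), hj⟩
      else q ⟨(i : ℕ) - 1, by have := i.isLt; omega⟩ 0

/-- The elementary Gauss factor `[[1, 0_{1×r}], [-f, I_r]]`. -/
def elemL (r : ℕ) (f : Matrix (Fin r) (Fin 1) ℂ) :
    Matrix (Fin (r + 1)) (Fin (r + 1)) ℂ :=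
  Matrix.of fun i j =>
    if hi : (i : ℕ) = 0 then (if (j : ℕ) = 0 then 1 else 0)
    else if hj : (j : ℕ) = 0 then -f ⟨(i : ℕ) - 1, by have := i.isLt; omega⟩ 0
    else if (i : ℕ) = (j : ℕ) then 1 else 0

/-- The elementary factor `[[I_r, 0_{r×1}], [-g, 1]]`. -/
def elemLrow (r : ℕ) (g : Matrix (Fin 1) (Fin r) ℂ) :
    Matrix (Fin (r + 1)) (Fin (r + 1)) ℂ :=
  Matrix.of fun i j =>
    if hi : (i : ℕ) < r then
      (if hj : (j : ℕ) < r then (if (i : ℕ) = (j : ℕ) then 1 else 0) else 0)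
    else if hj : (j : ℕ) < r then -g 0 ⟨(j : ℕ), hj⟩ else 1

/-- All leading principal minors are nonzero. -/
def StronglyRegular (N : ℕ) (A : Matrix (Fin N) (Fin N) ℂ) : Prop :=
  ∀ (k : ℕ) (hk : k ≤ N), 1 ≤ k →
    (A.submatrix (Fin.castLE hk) (Fin.castLE hk)).det ≠ 0

namespace LUaux

open Finset

lemma fin_sum_delta_mul {N : ℕ} (i : Fin N) (h : Fin N → ℂ) :
    ∑ l : Fin N, (if (i : ℕ) = (l : ℕ) then (1:ℂ) else 0) * h l = h i := by
  rw [Finset.sum_eq_single i]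
  · simp
  · intro b _ hb
    rw [if_neg fun hv => hb (Fin.ext hv.symm), zero_mul]
  · intro hi; exact absurd (Finset.mem_univ i) hi

lemma fin_sum_mul_delta {N : ℕ} (j : Fin N) (v : Fin N → ℂ) :
    ∑ l : Fin N, v l * (if (l : ℕ) = (j : ℕ) then (1:ℂ) else 0) = v j := by
  rw [Finset.sum_eq_single j]
  · simp
  · intro b _ hb
    rw [if_neg fun hv => hb (Fin.ext hv), mul_zero]
  · intro hj; exact absurd (Finset.mem_univ j) hj

lemma fin_sum_col {N : ℕ} (k0 : ℕ) (hk0 : k0 < N) (c : ℂ) (v : Fin N → ℂ) :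
    ∑ l : Fin N, (if (l : ℕ) = k0 then c else 0) * v l = c * v ⟨k0, hk0⟩ := by
  rw [Finset.sum_eq_single (⟨k0, hk0⟩ : Fin N)]
  · simp
  · intro b _ hb
    rw [if_neg fun hv => hb (Fin.ext hv), zero_mul]
  · intro hj; exact absurd (Finset.mem_univ _) hj

lemma embed_elemL_apply {N r : ℕ} (k : ℕ) (hk : 1 ≤ k) (f : Matrix (Fin r) (Fin 1) ℂ)
    (i j : Fin N) :
    embed N r k (elemL r f) i j =
      (if (i : ℕ) = (j : ℕ) then (1:ℂ) else 0) +
      (if h : (j : ℕ) = k - 1 ∧ k ≤ (i : ℕ) ∧ (i : ℕ) < k + r then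
          -f ⟨(i : ℕ) - k, by omega⟩ 0 else 0) := by
  have hiN := i.isLt
  have hjN := j.isLt
  have ff : ∀ (a b : ℕ) (ha : a < r) (hb : b < r), a = b →
      -f ⟨a, ha⟩ 0 = -f ⟨b, hb⟩ 0 := by
    intro a b ha hb h; subst h; rfl
  unfold embed elemL
  simp only [Matrix.of_apply]
  by_cases hw : k - 1 ≤ (i : ℕ) ∧ (i : ℕ) < k + r ∧ k - 1 ≤ (j : ℕ) ∧ (j : ℕ) < k + r
  · rw [dif_pos hw]
    split_ifs <;>
      first
        | rfl
        | omega
        | (exfalso; omega)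
        | (rw [zero_add]; exact ff _ _ _ _ (by omega))
        | (rw [zero_add]; exact (ff _ _ _ _ (by omega)).symm)
        | ring
  · rw [dif_neg hw]
    split_ifs <;> first | rfl | omega | (exfalso; omega) | ring

lemma step_apply {N r : ℕ} (k : ℕ) (hk : 1 ≤ k) (f : Matrix (Fin r) (Fin 1) ℂ)
    (S : Matrix (Fin N) (Fin N) ℂ) (i j : Fin N) :
    (embed N r k (elemL r f) * S) i j =
      S i j + (if h : k ≤ (i : ℕ) ∧ (i : ℕ) < k + r then
        (-f ⟨(i : ℕ) - k, by omega⟩ 0) * S ⟨k - 1, by have := i.isLt; omega⟩ j else 0) := by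
  rw [Matrix.mul_apply]
  have hrw : ∀ l : Fin N, embed N r k (elemL r f) i l * S l j
      = (if (i:ℕ) = (l:ℕ) then (1:ℂ) else 0) * S l j +
        (if h : (l:ℕ) = k - 1 ∧ k ≤ (i:ℕ) ∧ (i:ℕ) < k + r then
          -f ⟨(i:ℕ) - k, by omega⟩ 0 else 0) * S l j := by
    intro l
    rw [embed_elemL_apply k hk, add_mul]
  rw [Finset.sum_congr rfl fun l _ => hrw l, Finset.sum_add_distrib, fin_sum_delta_mul]
  congr 1
  by_cases hc : k ≤ (i:ℕ) ∧ (i:ℕ) < k + r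
  · have hkN : k - 1 < N := by have := i.isLt; omega
    have heq : ∀ l : Fin N,
        (if h : (l:ℕ) = k - 1 ∧ k ≤ (i:ℕ) ∧ (i:ℕ) < k + r then
          -f ⟨(i:ℕ) - k, by omega⟩ 0 else 0) * S l j
        = (if (l:ℕ) = k - 1 then -f ⟨(i:ℕ) - k, by have := hc; omega⟩ 0 else 0) * S l j := by
      intro l
      by_cases hl : (l:ℕ) = k - 1
      · rw [dif_pos ⟨hl, hc⟩, if_pos hl]
      · rw [dif_neg (by tauto), if_neg hl]
    rw [Finset.sum_congr rfl fun l _ => heq l, fin_sum_col (k-1) hkN, dif_pos hc]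
  · rw [dif_neg hc]
    apply Finset.sum_eq_zero
    intro l _
    rw [dif_neg (by tauto), zero_mul]

lemma embed_elemL_lower {N r : ℕ} (k : ℕ) (hk : 1 ≤ k) (f : Matrix (Fin r) (Fin 1) ℂ)
    (i j : Fin N) (hij : (i:ℕ) < (j:ℕ)) :
    embed N r k (elemL r f) i j = 0 := by
  rw [embed_elemL_apply k hk, if_neg (by omega), dif_neg (by omega), add_zero]

lemma embed_elemL_diag {N r : ℕ} (k : ℕ) (hk : 1 ≤ k) (f : Matrix (Fin r) (Fin 1) ℂ)
    (i : Fin N) :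
    embed N r k (elemL r f) i i = 1 := by
  rw [embed_elemL_apply k hk, if_pos rfl, dif_neg (by omega), add_zero]

lemma embed_elemL_inv {N r : ℕ} (k : ℕ) (hk : 1 ≤ k) (f : Matrix (Fin r) (Fin 1) ℂ) :
    embed N r k (elemL r (-f)) * embed N r k (elemL r f) = (1 : Matrix (Fin N) (Fin N) ℂ) := by
  ext i j
  have hiN := i.isLt
  have hjN := j.isLt
  rw [step_apply k hk, Matrix.one_apply]
  by_cases hc : k ≤ (i:ℕ) ∧ (i:ℕ) < k + r
  · rw [dif_pos hc]
    simp only [embed_elemL_apply k hk, Matrix.neg_apply, neg_neg, Fin.val_eq_val]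
    split_ifs <;> first | omega | (exfalso; omega) | ring
  · rw [dif_neg hc, add_zero, embed_elemL_apply k hk, dif_neg (by tauto), add_zero]
    simp [Fin.val_eq_val]

lemma sum_fin_truncate {N m : ℕ} (hm : m ≤ N) (g : Fin N → ℂ)
    (hg : ∀ l : Fin N, m ≤ (l:ℕ) → g l = 0) :
    ∑ l : Fin N, g l = ∑ l : Fin m, g (Fin.castLE hm l) := by
  have h1 : ∑ l : Fin N, g l
      = ∑ x ∈ Finset.range N, (fun x => if h : x < N then g ⟨x, h⟩ else 0) x := by
    rw [← Fin.sum_univ_eq_sum_range]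
    apply Finset.sum_congr rfl
    intro l _
    simp [l.isLt]
  have h2 : ∑ l : Fin m, g (Fin.castLE hm l)
      = ∑ x ∈ Finset.range m, (fun x => if h : x < N then g ⟨x, h⟩ else 0) x := by
    rw [← Fin.sum_univ_eq_sum_range]
    apply Finset.sum_congr rfl
    intro l _
    rw [dif_pos (lt_of_lt_of_le l.isLt hm)]
    rfl
  rw [h1, h2]
  symm
  apply Finset.sum_subset (Finset.range_subset_range.mpr hm)
  intro x hx hx2
  simp only [Finset.mem_range] at hx hx2
  rw [dif_pos hx]
  exact hg ⟨x, hx⟩ (show m ≤ x by omega)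

lemma det_leading_mul {N : ℕ} (E S : Matrix (Fin N) (Fin N) ℂ)
    (hE : ∀ i j : Fin N, (i:ℕ) < (j:ℕ) → E i j = 0) (hd : ∀ i, E i i = 1)
    (m : ℕ) (hm : m ≤ N) :
    ((E * S).submatrix (Fin.castLE hm) (Fin.castLE hm)).det
      = (S.submatrix (Fin.castLE hm) (Fin.castLE hm)).det := by
  have hsub : (E * S).submatrix (Fin.castLE hm) (Fin.castLE hm)
      = E.submatrix (Fin.castLE hm) (Fin.castLE hm)
        * S.submatrix (Fin.castLE hm) (Fin.castLE hm) := by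
    ext i j
    simp only [Matrix.submatrix_apply, Matrix.mul_apply]
    rw [sum_fin_truncate hm]
    intro l hl
    rw [hE (Fin.castLE hm i) l (by have := i.isLt; simp [Fin.coe_castLE]; omega), zero_mul]
  rw [hsub, Matrix.det_mul]
  have hone : (E.submatrix (Fin.castLE hm) (Fin.castLE hm)).det = 1 := by
    rw [Matrix.det_of_lowerTriangular]
    · apply Finset.prod_eq_one; intro i _; exact hd _
    · intro i j hij
      have hji : i < j := hij
      exact hE _ _ (by simpa [Fin.coe_castLE] using (Fin.lt_def.mp hji))
  rw [hone, one_mul]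

lemma pivot_ne_zero {N : ℕ} {S : Matrix (Fin N) (Fin N) ℂ} {k : ℕ} (hkN : k < N)
    (hcl : ∀ i j : Fin N, (j:ℕ) < (i:ℕ) → (j:ℕ) < k → S i j = 0)
    (hmin : ∀ m (hm : m ≤ N), 1 ≤ m →
      (S.submatrix (Fin.castLE hm) (Fin.castLE hm)).det ≠ 0) :
    S ⟨k, hkN⟩ ⟨k, hkN⟩ ≠ 0 := by
  have hm : k + 1 ≤ N := hkN
  have hdet := hmin (k+1) hm (by omega)
  have hut : ((S.submatrix (Fin.castLE hm) (Fin.castLE hm))).BlockTriangular id := by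
    intro i j hij
    have hji : (j:ℕ) < (i:ℕ) := hij
    have hik := i.isLt
    exact hcl _ _ (by simpa [Fin.coe_castLE] using hji) (by simp [Fin.coe_castLE]; omega)
  rw [Matrix.det_of_upperTriangular hut] at hdet
  have h2 := Finset.prod_ne_zero_iff.mp hdet ⟨k, Nat.lt_succ_self k⟩ (Finset.mem_univ _)
  simpa using h2

def fOf (N r : ℕ) (S : Matrix (Fin N) (Fin N) ℂ) (k : ℕ) : Matrix (Fin r) (Fin 1) ℂ :=
  Matrix.of fun i _ =>
    if h : 1 ≤ k ∧ k + (i : ℕ) < N then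
      S ⟨k + (i : ℕ), h.2⟩ ⟨k - 1, by omega⟩ / S ⟨k - 1, by omega⟩ ⟨k - 1, by omega⟩
    else 0

def Sm (N r : ℕ) (A : Matrix (Fin N) (Fin N) ℂ) : ℕ → Matrix (Fin N) (Fin N) ℂ
  | 0 => A
  | k+1 => embed N r (k+1) (elemL r (fOf N r (Sm N r A k) (k+1))) * Sm N r A k

def fE (N r : ℕ) (A : Matrix (Fin N) (Fin N) ℂ) (k : ℕ) : Matrix (Fin r) (Fin 1) ℂ :=
  fOf N r (Sm N r A (k - 1)) k

lemma Sm_succ (N r : ℕ) (A : Matrix (Fin N) (Fin N) ℂ) (k : ℕ) :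
    Sm N r A (k+1) = embed N r (k+1) (elemL r (fE N r A (k+1))) * Sm N r A k := rfl

lemma fOf_apply {N r : ℕ} (S : Matrix (Fin N) (Fin N) ℂ) (k : ℕ) (hk1 : 1 ≤ k)
    (hkN : k - 1 < N) (i : Fin N) (h1 : k ≤ (i:ℕ)) (h2 : (i:ℕ) < k + r) :
    fOf N r S k ⟨(i:ℕ) - k, by have := i.isLt; omega⟩ 0
      = S i ⟨k - 1, hkN⟩ / S ⟨k - 1, hkN⟩ ⟨k - 1, hkN⟩ := by
  have hiN := i.isLt
  unfold fOf
  simp only [Matrix.of_apply]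
  split
  · next h =>
    have e1 : (⟨k + ((⟨(i:ℕ) - k, by omega⟩ : Fin r) : ℕ), h.2⟩ : Fin N) = i :=
      Fin.ext (show k + ((i:ℕ) - k) = (i:ℕ) by omega)
    rw [e1]
  · next h => exact absurd ⟨hk1, show k + ((⟨(i:ℕ) - k, by omega⟩ : Fin r) : ℕ) < N by
      show k + ((i:ℕ) - k) < N; omega⟩ h

structure Inv (N r : ℕ) (S : Matrix (Fin N) (Fin N) ℂ) (k : ℕ) : Prop where
  cleared : ∀ i j : Fin N, (j:ℕ) < (i:ℕ) → (j:ℕ) < k → S i j = 0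
  lband : ∀ i j : Fin N, (j:ℕ) + r < (i:ℕ) → S i j = 0
  uband : ∀ i j : Fin N, (i:ℕ) + r < (j:ℕ) → S i j = 0
  minors : ∀ m (hm : m ≤ N), 1 ≤ m →
    ((S.submatrix (Fin.castLE hm) (Fin.castLE hm)).det) ≠ 0

lemma inv_step {N r : ℕ} (A : Matrix (Fin N) (Fin N) ℂ) (k : ℕ) (hkN : k < N)
    (IH : Inv N r (Sm N r A k) k) : Inv N r (Sm N r A (k+1)) (k+1) := by
  set S := Sm N r A k with hSdef
  have hpiv : S ⟨k, hkN⟩ ⟨k, hkN⟩ ≠ 0 := pivot_ne_zero hkN IH.cleared IH.minors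
  have hk1 : (1:ℕ) ≤ k + 1 := by omega
  have hkN' : k + 1 - 1 < N := by omega
  have hstep : ∀ i j : Fin N, Sm N r A (k+1) i j
      = S i j + (if h : k + 1 ≤ (i:ℕ) ∧ (i:ℕ) < k + 1 + r then
          -(S i ⟨k, hkN⟩ / S ⟨k, hkN⟩ ⟨k, hkN⟩) * S ⟨k, hkN⟩ j else 0) := by
    intro i j
    rw [Sm_succ, step_apply (k+1) hk1]
    congr 1
    by_cases hc : k + 1 ≤ (i:ℕ) ∧ (i:ℕ) < k + 1 + r
    · rw [dif_pos hc, dif_pos hc]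
      have hfv := fOf_apply (r := r) S (k+1) hk1 hkN' i hc.1 hc.2
      have hfE : fE N r A (k+1) = fOf N r S (k+1) := rfl
      rw [hfE, hfv, ← hSdef]
      rfl
    · rw [dif_neg hc, dif_neg hc]
  constructor
  · intro i j hji hjk
    rw [hstep i j]
    by_cases hc : k + 1 ≤ (i:ℕ) ∧ (i:ℕ) < k + 1 + r
    · rw [dif_pos hc]
      by_cases hj : (j:ℕ) = k
      · have hjfin : j = ⟨k, hkN⟩ := Fin.ext hj
        rw [hjfin, neg_mul, div_mul_cancel₀ _ hpiv]
        ring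
      · have hj' : (j:ℕ) < k := by omega
        rw [IH.cleared i j hji hj', IH.cleared ⟨k, hkN⟩ j (by simpa using hj') hj']
        simp
    · rw [dif_neg hc, add_zero]
      by_cases hj : (j:ℕ) = k
      · exact IH.lband i j (by omega)
      · exact IH.cleared i j hji (by omega)
  · intro i j h
    rw [hstep i j]
    by_cases hc : k + 1 ≤ (i:ℕ) ∧ (i:ℕ) < k + 1 + r
    · rw [dif_pos hc, IH.lband i j h,
        IH.cleared ⟨k, hkN⟩ j (by simp; omega) (by omega)]
      simp
    · rw [dif_neg hc, add_zero]; exact IH.lband i j h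
  · intro i j h
    rw [hstep i j]
    by_cases hc : k + 1 ≤ (i:ℕ) ∧ (i:ℕ) < k + 1 + r
    · rw [dif_pos hc, IH.uband i j h, IH.uband ⟨k, hkN⟩ j (by simp; omega)]
      simp
    · rw [dif_neg hc, add_zero]; exact IH.uband i j h
  · intro m hm hm1
    rw [Sm_succ, det_leading_mul _ _
      (fun i j hij => embed_elemL_lower (k+1) hk1 _ i j hij)
      (fun i => embed_elemL_diag (k+1) hk1 _ i) m hm]
    exact IH.minors m hm hm1

lemma inv_all {N r : ℕ} (A : Matrix (Fin N) (Fin N) ℂ) (hsr : StronglyRegular N A)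
    (hlb : ∀ i j : Fin N, (j:ℕ) + r < (i:ℕ) → A i j = 0)
    (hub : ∀ i j : Fin N, (i:ℕ) + r < (j:ℕ) → A i j = 0) :
    ∀ k, k ≤ N → Inv N r (Sm N r A k) k := by
  intro k
  induction k with
  | zero =>
    intro _
    exact ⟨fun i j _ h => absurd h (by omega), hlb, hub, fun m hm h1 => hsr m hm h1⟩
  | succ k ih =>
    intro hk
    exact inv_step A k (by omega) (ih (by omega))

def Em (N r : ℕ) (A : Matrix (Fin N) (Fin N) ℂ) (m : ℕ) : Matrix (Fin N) (Fin N) ℂ :=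
  (((List.range' 1 m).reverse).map (fun k => embed N r k (elemL r (fE N r A k)))).prod

def Tm (N r : ℕ) (A : Matrix (Fin N) (Fin N) ℂ) (m : ℕ) : Matrix (Fin N) (Fin N) ℂ :=
  ((List.range' 1 m).map (fun k => embed N r k (elemL r (-(fE N r A k))))).prod

lemma range'_succ_append (m : ℕ) : List.range' 1 (m+1) = List.range' 1 m ++ [1+m] := by
  have h := @List.range'_append_1 1 m 1
  rw [List.range'_one] at h
  exact h.symm

lemma Em_succ {N r : ℕ} (A : Matrix (Fin N) (Fin N) ℂ) (m : ℕ) :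
    Em N r A (m+1) = embed N r (m+1) (elemL r (fE N r A (m+1))) * Em N r A m := by
  unfold Em
  rw [range'_succ_append, show 1 + m = m + 1 from by omega]
  simp [List.prod_append]

lemma Tm_succ {N r : ℕ} (A : Matrix (Fin N) (Fin N) ℂ) (m : ℕ) :
    Tm N r A (m+1) = Tm N r A m * embed N r (m+1) (elemL r (-(fE N r A (m+1)))) := by
  unfold Tm
  rw [range'_succ_append, show 1 + m = m + 1 from by omega]
  simp [List.prod_append]

lemma Em_mul_A {N r : ℕ} (A : Matrix (Fin N) (Fin N) ℂ) (m : ℕ) :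
    Em N r A m * A = Sm N r A m := by
  induction m with
  | zero => simp [Em, Sm]
  | succ k ih => rw [Em_succ, mul_assoc, ih, ← Sm_succ]

lemma Tm_mul_Em {N r : ℕ} (A : Matrix (Fin N) (Fin N) ℂ) (m : ℕ) :
    Tm N r A m * Em N r A m = 1 := by
  induction m with
  | zero => simp [Tm, Em]
  | succ k ih =>
    have hWE := embed_elemL_inv (N := N) (k+1) (by omega) (fE N r A (k+1))
    rw [Tm_succ, Em_succ, mul_assoc,
      ← mul_assoc (embed N r (k+1) (elemL r (-(fE N r A (k+1))))), hWE, one_mul]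
    exact ih

lemma right_step {N r : ℕ} (m : ℕ) (g : Matrix (Fin r) (Fin 1) ℂ)
    (S : Matrix (Fin N) (Fin N) ℂ)
    (hS : ∀ i l : Fin N, m ≤ (l:ℕ) → S i l = if (i:ℕ) = (l:ℕ) then 1 else 0)
    (i j : Fin N) :
    (S * embed N r (m+1) (elemL r g)) i j
      = S i j + (if h : (j:ℕ) = m ∧ m+1 ≤ (i:ℕ) ∧ (i:ℕ) < m+1+r then
          -g ⟨(i:ℕ) - (m+1), by omega⟩ 0 else 0) := by
  rw [Matrix.mul_apply]
  have hrw : ∀ l : Fin N, S i l * embed N r (m+1) (elemL r g) l j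
      = S i l * (if (l:ℕ) = (j:ℕ) then (1:ℂ) else 0)
        + (if (i:ℕ) = (l:ℕ) then (1:ℂ) else 0) *
          (if h : (j:ℕ) = m+1-1 ∧ m+1 ≤ (l:ℕ) ∧ (l:ℕ) < m+1+r then
            -g ⟨(l:ℕ) - (m+1), by omega⟩ 0 else 0) := by
    intro l
    rw [embed_elemL_apply (m+1) (by omega), mul_add]
    congr 1
    by_cases hcl : (j:ℕ) = m+1-1 ∧ m+1 ≤ (l:ℕ) ∧ (l:ℕ) < m+1+r
    · rw [dif_pos hcl, hS i l (by omega)]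
    · rw [dif_neg hcl, mul_zero, mul_zero]
  rw [Finset.sum_congr rfl fun l _ => hrw l, Finset.sum_add_distrib,
    fin_sum_mul_delta j (fun l => S i l),
    fin_sum_delta_mul i (fun l => if h : (j:ℕ) = m+1-1 ∧ m+1 ≤ (l:ℕ) ∧ (l:ℕ) < m+1+r then
      -g ⟨(l:ℕ) - (m+1), by omega⟩ 0 else 0)]
  rfl

lemma Tm_props {N r : ℕ} (A : Matrix (Fin N) (Fin N) ℂ) (m : ℕ) :
    (∀ i j : Fin N, (i:ℕ) < (j:ℕ) → Tm N r A m i j = 0)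
    ∧ (∀ i : Fin N, Tm N r A m i i = 1)
    ∧ (∀ i j : Fin N, (j:ℕ) + r < (i:ℕ) → Tm N r A m i j = 0)
    ∧ (∀ i j : Fin N, m ≤ (j:ℕ) → Tm N r A m i j = if (i:ℕ) = (j:ℕ) then 1 else 0) := by
  induction m with
  | zero =>
    have h1 : Tm N r A 0 = 1 := by simp [Tm]
    rw [h1]
    refine ⟨?_, ?_, ?_, ?_⟩
    · intro i j hij
      exact Matrix.one_apply_ne (fun h => by subst h; omega)
    · intro i
      exact Matrix.one_apply_eq i
    · intro i j hij
      exact Matrix.one_apply_ne (fun h => by subst h; omega)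
    · intro i j _
      rw [Matrix.one_apply]
      simp [Fin.val_eq_val]
  | succ k ih =>
    obtain ⟨h1, h2, h3, h4⟩ := ih
    have hstep : ∀ i j : Fin N, Tm N r A (k+1) i j
        = Tm N r A k i j + (if h : (j:ℕ) = k ∧ k+1 ≤ (i:ℕ) ∧ (i:ℕ) < k+1+r then
            -(-(fE N r A (k+1))) ⟨(i:ℕ) - (k+1), by omega⟩ 0 else 0) := by
      intro i j
      rw [Tm_succ, right_step k _ _ (fun i l hl => h4 i l hl)]
    refine ⟨?_, ?_, ?_, ?_⟩
    · intro i j hij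
      rw [hstep, h1 i j hij, dif_neg (by omega)]
      norm_num
    · intro i
      rw [hstep, h2 i, dif_neg (by omega)]
      norm_num
    · intro i j hij
      rw [hstep, h3 i j hij, dif_neg (by omega)]
      norm_num
    · intro i j hj
      rw [hstep, h4 i j (by omega), dif_neg (by omega), add_zero]

def IdOut (N r : ℕ) (Z : Matrix (Fin N) (Fin N) ℂ) : Prop :=
  ∀ i j : Fin N, ((i:ℕ) < N - r ∨ (j:ℕ) < N - r) →
    Z i j = if (i:ℕ) = (j:ℕ) then 1 else 0

lemma idOut_one {N r : ℕ} : IdOut N r 1 := by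
  intro i j _
  rw [Matrix.one_apply]
  simp [Fin.val_eq_val]

lemma idOut_mul {N r : ℕ} {X Y : Matrix (Fin N) (Fin N) ℂ}
    (hX : IdOut N r X) (hY : IdOut N r Y) : IdOut N r (X * Y) := by
  intro i j hij
  rw [Matrix.mul_apply]
  rcases hij with hi | hj
  · have hc : ∀ l, X i l * Y l j = (if (i:ℕ) = (l:ℕ) then (1:ℂ) else 0) * Y l j :=
      fun l => by rw [hX i l (Or.inl hi)]
    rw [Finset.sum_congr rfl fun l _ => hc l, fin_sum_delta_mul]
    exact hY i j (Or.inl hi)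
  · have hc : ∀ l : Fin N, X i l * Y l j = X i l * (if (l:ℕ) = (j:ℕ) then (1:ℂ) else 0) :=
      fun l => by rw [hY l j (Or.inr hj)]
    rw [Finset.sum_congr rfl fun l _ => hc l, fin_sum_mul_delta]
    exact hX i j (Or.inr hj)

lemma idOut_prod {N r : ℕ} (l : List (Matrix (Fin N) (Fin N) ℂ))
    (h : ∀ M ∈ l, IdOut N r M) : IdOut N r l.prod := by
  induction l with
  | nil => simpa using (idOut_one (N := N) (r := r))
  | cons a t ih =>
    rw [List.prod_cons]
    exact idOut_mul (h a (by simp)) (ih fun M hM => h M (by simp [hM]))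

def UnitLow (N : ℕ) (Z : Matrix (Fin N) (Fin N) ℂ) : Prop :=
  (∀ i j : Fin N, (i:ℕ) < (j:ℕ) → Z i j = 0) ∧ ∀ i, Z i i = 1

lemma unitLow_one {N : ℕ} : UnitLow N 1 :=
  ⟨fun i j hij => Matrix.one_apply_ne (fun h => by subst h; omega),
   fun i => Matrix.one_apply_eq i⟩

lemma unitLow_mul {N : ℕ} {X Y : Matrix (Fin N) (Fin N) ℂ}
    (hX : UnitLow N X) (hY : UnitLow N Y) : UnitLow N (X * Y) := by
  constructor
  · intro i j hij
    rw [Matrix.mul_apply]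
    apply Finset.sum_eq_zero
    intro l _
    by_cases hl : (i:ℕ) < (l:ℕ)
    · rw [hX.1 i l hl, zero_mul]
    · rw [hY.1 l j (by omega), mul_zero]
  · intro i
    rw [Matrix.mul_apply, Finset.sum_eq_single i]
    · rw [hX.2, hY.2, one_mul]
    · intro b _ hb
      have hbi : (b:ℕ) ≠ (i:ℕ) := fun h => hb (Fin.ext h)
      by_cases hl : (i:ℕ) < (b:ℕ)
      · rw [hX.1 i b hl, zero_mul]
      · rw [hY.1 b i (by omega), mul_zero]
    · intro h; exact absurd (Finset.mem_univ i) h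

lemma unitLow_prod {N : ℕ} (l : List (Matrix (Fin N) (Fin N) ℂ))
    (h : ∀ M ∈ l, UnitLow N M) : UnitLow N l.prod := by
  induction l with
  | nil => simpa using (unitLow_one (N := N))
  | cons a t ih =>
    rw [List.prod_cons]
    exact unitLow_mul (h a (by simp)) (ih fun M hM => h M (by simp [hM]))

lemma embed_elemL_unitLow {N r : ℕ} (k : ℕ) (hk : 1 ≤ k) (f : Matrix (Fin r) (Fin 1) ℂ) :
    UnitLow N (embed N r k (elemL r f)) :=
  ⟨embed_elemL_lower k hk f, embed_elemL_diag k hk f⟩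

lemma embed_elemL_idOut {N r : ℕ} (k : ℕ) (hk : N - r + 1 ≤ k) (hk1 : 1 ≤ k)
    (f : Matrix (Fin r) (Fin 1) ℂ) : IdOut N r (embed N r k (elemL r f)) := by
  intro i j hij
  rw [embed_elemL_apply k hk1, dif_neg (by omega), add_zero]

lemma embedLast_eq {N r : ℕ} (hrN : r ≤ N) (Z : Matrix (Fin N) (Fin N) ℂ)
    (h : IdOut N r Z) :
    embedLast N r (Matrix.of fun i j : Fin r =>
      Z ⟨N - r + (i:ℕ), by have := i.isLt; omega⟩
        ⟨N - r + (j:ℕ), by have := j.isLt; omega⟩) = Z := by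
  ext i j
  have hiN := i.isLt
  have hjN := j.isLt
  unfold embedLast
  simp only [Matrix.of_apply]
  by_cases hw : N - r ≤ (i:ℕ) ∧ N - r ≤ (j:ℕ)
  · rw [dif_pos hw]
    have hZ : ∀ (a b : Fin N), a = i → b = j → Z a b = Z i j := by
      rintro a b rfl rfl; rfl
    exact hZ _ _ (Fin.ext (show N - r + ((i:ℕ) - (N - r)) = (i:ℕ) by omega))
      (Fin.ext (show N - r + ((j:ℕ) - (N - r)) = (j:ℕ) by omega))
  · rw [dif_neg hw]
    exact (h i j (by omega)).symm

end LUaux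

/-- Every strongly regular two-sided band matrix `A` of order `r` admits a factorization
`A = L·R` with `L` unit lower triangular and lower band of order `r`, whose inverse
factors as `L⁻¹ = L̃_{N-r+1}·L̃_{N-r}⋯L̃_1` with elementary factors
`L_k = [[1, 0], [-f_k, I_r]]` and a unit lower triangular `L_{N-r+1}`, and with `R`
upper triangular and upper band of order `r`. -/
theorem stronglyRegular_twoSidedBand_lu (N r : ℕ) (hr : 0 < r) (hNr : r < N)
    (A : Matrix (Fin N) (Fin N) ℂ) (hsr : StronglyRegular N A)
    (hband : ∀ i j : Fin N, ((j : ℕ) + r < (i : ℕ) ∨ (i : ℕ) + r < (j : ℕ)) → A i j = 0) :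
    ∃ (L R : Matrix (Fin N) (Fin N) ℂ)
      (f : ℕ → Matrix (Fin r) (Fin 1) ℂ) (Llast : Matrix (Fin r) (Fin r) ℂ),
      A = L * R ∧
      (∀ i j : Fin N, (i : ℕ) < (j : ℕ) → L i j = 0) ∧ (∀ i : Fin N, L i i = 1) ∧
      IsLowerBand N r L ∧
      (∀ i j : Fin r, (i : ℕ) < (j : ℕ) → Llast i j = 0) ∧ (∀ i : Fin r, Llast i i = 1) ∧
      L⁻¹ = embedLast N r Llast * prodDesc N r (fun k => elemL r (f k)) ∧
      (∀ i j : Fin N, (j : ℕ) < (i : ℕ) → R i j = 0) ∧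
      (∀ i j : Fin N, (i : ℕ) + r < (j : ℕ) → R i j = 0) := by
  classical
  have hN2 : 2 ≤ N := by omega
  have hrN : r ≤ N := le_of_lt hNr
  have hInv := LUaux.inv_all A hsr (fun i j h => hband i j (Or.inl h))
    (fun i j h => hband i j (Or.inr h)) (N-1) (by omega)
  have hTE := LUaux.Tm_mul_Em (N := N) (r := r) A (N-1)
  have hEA := LUaux.Em_mul_A (N := N) (r := r) A (N-1)
  obtain ⟨hT1, hT2, hT3, hT4⟩ := LUaux.Tm_props (N := N) (r := r) A (N-1)
  have hsplit : List.range' 1 (N-1) = List.range' 1 (N-r) ++ List.range' (1+(N-r)) (r-1) := by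
    have h := @List.range'_append_1 1 (N-r) (r-1)
    rw [h]
    congr 1
    omega
  set Ztail := (((List.range' (1+(N-r)) (r-1)).reverse).map
    (fun k => embed N r k (elemL r (LUaux.fE N r A k)))).prod with hZt
  have hEmsplit : LUaux.Em N r A (N-1) = Ztail * LUaux.Em N r A (N-r) := by
    rw [hZt]
    unfold LUaux.Em
    rw [hsplit, List.reverse_append, List.map_append, List.prod_append]
  have htailmem : ∀ M ∈ (((List.range' (1+(N-r)) (r-1)).reverse).map
      (fun k => embed N r k (elemL r (LUaux.fE N r A k)))),
      LUaux.IdOut N r M ∧ LUaux.UnitLow N M := by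
    intro M hM
    rw [List.mem_map] at hM
    obtain ⟨k, hk, rfl⟩ := hM
    rw [List.mem_reverse, List.mem_range'_1] at hk
    exact ⟨LUaux.embed_elemL_idOut k (by omega) (by omega) _,
      LUaux.embed_elemL_unitLow k (by omega) _⟩
  have hZout : LUaux.IdOut N r Ztail := LUaux.idOut_prod _ (fun M hM => (htailmem M hM).1)
  have hZlow : LUaux.UnitLow N Ztail := LUaux.unitLow_prod _ (fun M hM => (htailmem M hM).2)
  refine ⟨LUaux.Tm N r A (N-1), LUaux.Sm N r A (N-1), LUaux.fE N r A,
    Matrix.of fun i j : Fin r =>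
      Ztail ⟨N - r + (i:ℕ), by have := i.isLt; omega⟩
        ⟨N - r + (j:ℕ), by have := j.isLt; omega⟩,
    ?_, hT1, hT2, hT3, ?_, ?_, ?_, ?_, ?_⟩
  · rw [← hEA, ← mul_assoc, hTE, one_mul]
  · intro i j hij
    simp only [Matrix.of_apply]
    exact hZlow.1 _ _ (show N - r + (i:ℕ) < N - r + (j:ℕ) by omega)
  · intro i
    simp only [Matrix.of_apply]
    exact hZlow.2 _
  · have hU : IsUnit (LUaux.Em N r A (N-1)).det := Matrix.isUnit_det_of_left_inverse hTE
    have hInvE : (LUaux.Em N r A (N-1))⁻¹ = LUaux.Tm N r A (N-1) :=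
      Matrix.inv_eq_left_inv hTE
    rw [← hInvE, Matrix.nonsing_inv_nonsing_inv _ hU, hEmsplit,
      LUaux.embedLast_eq hrN Ztail hZout]
    rfl
  · intro i j hij
    exact hInv.cleared i j hij (by have := i.isLt; omega)
  · exact hInv.uband
end
end

section
/- Let A be an N×N strongly regular complex matrix with A(i,j) = 0 whenever |i−j| > r. Suppose A = L·R where R is an invertible upper triangular matrix with R(i,j) = 0 for j − i > r, and L is a unit lower triangular matrix whose inverse factors as L⁻¹ = L̃_{N−r+1}·L̃_{N−r}⋯L̃_1 (product in decreasing order of indices) with lower triangular factors L_k ∈ ℂ^{(r+1)×(r+1)} (k = 1,…,N−r) and lower triangular L_{N−r+1} ∈ ℂ^{r×r}. Partition L_k = [[p_L(k), d_L(k)],[a_L(k), q_L(k)]] (blocks of sizes 1×r, 1×1, r×r, r×1). Set x_k = R(k,k) and X_k = R(k, k+1:k+r) for k = 1,…,N−r, and S_{N−r+1} = R(N−r+1:N, N−r+1:N). Define q(k) = q_L(k) and a(k) = a_L(k) for k = 1,…,N−r; set p(N−r+1) = S_{N−r+1}⁻¹·L_{N−r+1} and t_{N−r+1} = p(N−r+1);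 and for k = N−r,…,1 set p(k) = (1/x_k)·(p_L(k) − X_k·t_{k+1}·a(k)) and t_k = (p(k); t_{k+1}(1:r−1, :)·a(k)) (the row p(k) stacked above the (r−1)×r matrix t_{k+1}(1:r−1,:)·a(k)). Then p(i), q(i), a(i) (i = 1,…,N−r), p(N−r+1) are lower Green generators of A⁻¹. -/
open Matrix

noncomputable section

namespace LUAux

lemma sum_window {N : ℕ} (f : Fin N → ℂ) (o w : ℕ) (how : o + w ≤ N)
    (hf : ∀ l : Fin N, (l : ℕ) < o ∨ o + w ≤ (l : ℕ) → f l = 0) :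
    ∑ l, f l = ∑ m : Fin w, f ⟨o + (m : ℕ), by have := m.isLt; omega⟩ := by
  set g : ℕ → ℂ := fun x => if h : x < N then f ⟨x, h⟩ else 0 with hg
  have h1 : ∑ l, f l = ∑ x ∈ Finset.range N, g x := by
    rw [← Fin.sum_univ_eq_sum_range]
    exact Finset.sum_congr rfl fun l _ => by simp [hg]
  have h2 : ∑ x ∈ Finset.range N, g x = ∑ x ∈ Finset.Ico o (o + w), g x := by
    refine (Finset.sum_subset ?_ ?_).symm
    · intro x hx
      simp only [Finset.mem_Ico] at hx
      simp only [Finset.mem_range]; omega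
    · intro x hx hx'
      simp only [Finset.mem_range] at hx
      simp only [Finset.mem_Ico] at hx'
      simp only [hg, dif_pos hx]
      exact hf ⟨x, hx⟩ (show x < o ∨ o + w ≤ x by omega)
  rw [h1, h2, Finset.sum_Ico_eq_sum_range]
  have hw : o + w - o = w := by omega
  rw [hw, ← Fin.sum_univ_eq_sum_range (fun i => g (o + i)) w]
  refine Finset.sum_congr rfl fun m _ => ?_
  have hm := m.isLt
  simp only [hg]
  rw [dif_pos (by omega)]

lemma listProdColId {N : ℕ} (l : List (Matrix (Fin N) (Fin N) ℂ)) (c : Fin N)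
    (h : ∀ M ∈ l, ∀ i, M i c = if i = c then 1 else 0) (i : Fin N) :
    l.prod i c = if i = c then 1 else 0 := by
  induction l generalizing i with
  | nil => simp [Matrix.one_apply]
  | cons M rest ih =>
    rw [List.prod_cons, Matrix.mul_apply]
    have h1 : ∀ m, rest.prod m c = if m = c then 1 else 0 :=
      fun m => ih (fun M' hM' => h M' (List.mem_cons_of_mem _ hM')) m
    simp only [h1, mul_ite, mul_one, mul_zero, Finset.sum_ite_eq', Finset.mem_univ, if_true]
    exact h M (List.mem_cons_self) i

lemma listProdRowId {N : ℕ} (l : List (Matrix (Fin N) (Fin N) ℂ)) (i : Fin N)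
    (h : ∀ M ∈ l, ∀ c, M i c = if i = c then 1 else 0) (c : Fin N) :
    l.prod i c = if i = c then 1 else 0 := by
  induction l generalizing c with
  | nil => simp [Matrix.one_apply]
  | cons M rest ih =>
    rw [List.prod_cons, Matrix.mul_apply]
    simp only [h M (List.mem_cons_self), ite_mul, one_mul, zero_mul,
      Finset.sum_ite_eq, Finset.mem_univ, if_true]
    exact ih (fun M' hM' => h M' (List.mem_cons_of_mem _ hM')) c

lemma embed_col_id {N r : ℕ} (k : ℕ) (M : Matrix (Fin (r + 1)) (Fin (r + 1)) ℂ)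
    (c : Fin N) (hc : (c : ℕ) + 1 < k ∨ k + r ≤ (c : ℕ)) (i : Fin N) :
    embed N r k M i c = if i = c then 1 else 0 := by
  unfold embed
  simp only [Matrix.of_apply]
  rw [dif_neg (by omega)]
  rcases eq_or_ne i c with h | h
  · simp [h]
  · rw [if_neg (by simpa [Fin.ext_iff] using h), if_neg h]

lemma embed_row_id {N r : ℕ} (k : ℕ) (M : Matrix (Fin (r + 1)) (Fin (r + 1)) ℂ)
    (i : Fin N) (hi : (i : ℕ) + 1 < k ∨ k + r ≤ (i : ℕ)) (c : Fin N) :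
    embed N r k M i c = if i = c then 1 else 0 := by
  unfold embed
  simp only [Matrix.of_apply]
  rw [dif_neg (by omega)]
  rcases eq_or_ne i c with h | h
  · simp [h]
  · rw [if_neg (by simpa [Fin.ext_iff] using h), if_neg h]

lemma embedLast_col_id {N r : ℕ} (M : Matrix (Fin r) (Fin r) ℂ)
    (c : Fin N) (hc : (c : ℕ) < N - r) (i : Fin N) :
    embedLast N r M i c = if i = c then 1 else 0 := by
  unfold embedLast
  simp only [Matrix.of_apply]
  rw [dif_neg (by omega)]
  rcases eq_or_ne i c with h | h
  · simp [h]
  · rw [if_neg (by simpa [Fin.ext_iff] using h), if_neg h]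

lemma embedLast_row_id {N r : ℕ} (M : Matrix (Fin r) (Fin r) ℂ)
    (i : Fin N) (hi : (i : ℕ) < N - r) (c : Fin N) :
    embedLast N r M i c = if i = c then 1 else 0 := by
  unfold embedLast
  simp only [Matrix.of_apply]
  rw [dif_neg (by omega)]
  rcases eq_or_ne i c with h | h
  · simp [h]
  · rw [if_neg (by simpa [Fin.ext_iff] using h), if_neg h]

def Cmat (N r : ℕ) (Lk : ℕ → Matrix (Fin (r + 1)) (Fin (r + 1)) ℂ)
    (Llast : Matrix (Fin r) (Fin r) ℂ) (k : ℕ) : Matrix (Fin N) (Fin N) ℂ :=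
  (embedLast N r Llast ::
    ((List.range' k (N - r + 1 - k)).reverse.map (fun m => embed N r m (Lk m)))).prod

def Bmat (N r : ℕ) (Lk : ℕ → Matrix (Fin (r + 1)) (Fin (r + 1)) ℂ)
    (Llast : Matrix (Fin r) (Fin r) ℂ) (R : Matrix (Fin N) (Fin N) ℂ) (k : ℕ) :
    Matrix (Fin N) (Fin N) ℂ :=
  R⁻¹ * Cmat N r Lk Llast k

lemma Cmat_top {N r : ℕ} (Lk : ℕ → Matrix (Fin (r + 1)) (Fin (r + 1)) ℂ)
    (Llast : Matrix (Fin r) (Fin r) ℂ) :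
    Cmat N r Lk Llast (N - r + 1) = embedLast N r Llast := by
  simp [Cmat]

lemma Cmat_one {N r : ℕ} (Lk : ℕ → Matrix (Fin (r + 1)) (Fin (r + 1)) ℂ)
    (Llast : Matrix (Fin r) (Fin r) ℂ) :
    Cmat N r Lk Llast 1 = embedLast N r Llast * prodDesc N r Lk := by
  rw [Cmat, List.prod_cons]
  rfl

lemma Cmat_step {N r : ℕ} (Lk : ℕ → Matrix (Fin (r + 1)) (Fin (r + 1)) ℂ)
    (Llast : Matrix (Fin r) (Fin r) ℂ) (k : ℕ) (hk : k ≤ N - r) :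
    Cmat N r Lk Llast k = Cmat N r Lk Llast (k + 1) * embed N r k (Lk k) := by
  have h : N - r + 1 - k = (N - r + 1 - (k + 1)) + 1 := by omega
  rw [Cmat, h, List.range'_succ, List.reverse_cons, List.map_append, List.prod_cons,
    List.prod_append, Cmat, List.prod_cons]
  simp [mul_assoc]

lemma Cmat_col {N r : ℕ} (Lk : ℕ → Matrix (Fin (r + 1)) (Fin (r + 1)) ℂ)
    (Llast : Matrix (Fin r) (Fin r) ℂ) (k : ℕ) (hk : k ≤ N - r + 1)
    (c : Fin N) (hc : (c : ℕ) + 1 < k) (i : Fin N) :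
    Cmat N r Lk Llast k i c = if i = c then 1 else 0 := by
  refine listProdColId _ _ ?_ i
  intro M hM
  rcases List.mem_cons.mp hM with h | h
  · subst h
    exact embedLast_col_id _ _ (by omega)
  · rw [List.mem_map] at h
    obtain ⟨m, hm, rfl⟩ := h
    rw [List.mem_reverse, List.mem_range'] at hm
    obtain ⟨i', hi', rfl⟩ := hm
    exact embed_col_id _ _ _ (Or.inl (by omega))

lemma Cmat_row {N r : ℕ} (Lk : ℕ → Matrix (Fin (r + 1)) (Fin (r + 1)) ℂ)
    (Llast : Matrix (Fin r) (Fin r) ℂ) (k : ℕ) (hk : k ≤ N - r + 1)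
    (i : Fin N) (hi : (i : ℕ) + 1 < k) (c : Fin N) :
    Cmat N r Lk Llast k i c = if i = c then 1 else 0 := by
  refine listProdRowId _ _ ?_ c
  intro M hM
  rcases List.mem_cons.mp hM with h | h
  · subst h
    exact embedLast_row_id _ _ (by omega)
  · rw [List.mem_map] at h
    obtain ⟨m, hm, rfl⟩ := h
    rw [List.mem_reverse, List.mem_range'] at hm
    obtain ⟨i', hi', rfl⟩ := hm
    exact embed_row_id _ _ _ (Or.inl (by omega))

lemma aGT_self {r : ℕ} (a : ℕ → Matrix (Fin r) (Fin r) ℂ) (i s : ℕ) (h : i - 1 ≤ s) :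
    aGT r a i s = 1 := by
  unfold aGT
  rw [show i - 1 - s = 0 by omega]
  simp

lemma aGT_step {r : ℕ} (a : ℕ → Matrix (Fin r) (Fin r) ℂ) (i s : ℕ) (h : s + 1 ≤ i - 1) :
    aGT r a i s = aGT r a i (s + 1) * a (s + 1) := by
  unfold aGT
  rw [show i - 1 - s = (i - 1 - (s + 1)) + 1 by omega, List.range'_succ,
    List.reverse_cons, List.map_append, List.prod_append]
  simp

end LUAux

set_option maxHeartbeats 1000000000 in
/-- **LU-based inversion of a two-sided band matrix (linear complexity version).**
With `A = L·R`, `R` invertible upper triangular and upper band of order `r`, and `L` unit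
lower triangular with `L⁻¹ = L̃_{N-r+1}·L̃_{N-r}⋯L̃_1` (lower triangular factors), the data
`q(k) = q_L(k)`, `a(k) = a_L(k)` (blocks of `L_k`),
`p(N-r+1) = t_{N-r+1} = (R(N-r+1:N, N-r+1:N))⁻¹·L_{N-r+1}` and, recursively downwards,
`p(k) = (1/x_k)·(p_L(k) − X_k·t_{k+1}·a(k))`, `t_k = (p(k); t_{k+1}(1:r-1, :)·a(k))`,
yield lower Green generators of `A⁻¹`. -/
theorem lu_inversion_twoSidedBand (N r : ℕ) (hr : 0 < r) (hNr : r < N)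
    (A : Matrix (Fin N) (Fin N) ℂ) (hsr : StronglyRegular N A)
    (hband : ∀ i j : Fin N, ((j : ℕ) + r < (i : ℕ) ∨ (i : ℕ) + r < (j : ℕ)) → A i j = 0)
    (L R : Matrix (Fin N) (Fin N) ℂ)
    (hLtri : ∀ i j : Fin N, (i : ℕ) < (j : ℕ) → L i j = 0)
    (hLdiag : ∀ i : Fin N, L i i = 1)
    (hR : IsUnit R)
    (hRtri : ∀ i j : Fin N, (j : ℕ) < (i : ℕ) → R i j = 0)
    (hRband : ∀ i j : Fin N, (i : ℕ) + r < (j : ℕ) → R i j = 0)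
    (hALR : A = L * R)
    (Lk : ℕ → Matrix (Fin (r + 1)) (Fin (r + 1)) ℂ) (Llast : Matrix (Fin r) (Fin r) ℂ)
    (hLkTri : ∀ (k : ℕ), 1 ≤ k → k ≤ N - r →
      ∀ i j : Fin (r + 1), (i : ℕ) < (j : ℕ) → Lk k i j = 0)
    (hLlastTri : ∀ i j : Fin r, (i : ℕ) < (j : ℕ) → Llast i j = 0)
    (hfac : L⁻¹ = embedLast N r Llast * prodDesc N r Lk)
    -- the truncated matrices `t_k` (of size `r × r`)
    (t : ℕ → Matrix (Fin r) (Fin r) ℂ)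
    (htTop : ∀ (i : Fin r) (j : Fin r),
      t (N - r + 1) i j
        = (((Matrix.of fun i j : Fin r =>
              R ⟨N - r + (i : ℕ), by have := i.isLt; omega⟩
                ⟨N - r + (j : ℕ), by have := j.isLt; omega⟩)⁻¹) * Llast) i j)
    (p : ℕ → Matrix (Fin 1) (Fin r) ℂ)
    (hp : ∀ (k : ℕ) (hk1 : 1 ≤ k) (hk2 : k ≤ N - r) (j : Fin r),
      p k 0 j = (1 / R ⟨k - 1, by omega⟩ ⟨k - 1, by omega⟩)
        * (blkP r (Lk k) 0 j
            - ∑ τ : Fin r, ∑ l : Fin r,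
                R ⟨k - 1, by omega⟩ ⟨k + (τ : ℕ), by have := τ.isLt; omega⟩
                  * t (k + 1) τ l * blkA r (Lk k) l j))
    (htFirst : ∀ (k : ℕ) (hk1 : 1 ≤ k) (hk2 : k ≤ N - r) (j : Fin r),
      t k ⟨0, by omega⟩ j = p k 0 j)
    (htRec : ∀ (k : ℕ) (hk1 : 1 ≤ k) (hk2 : k ≤ N - r)
        (i : ℕ) (hi : i < r - 1) (j : Fin r),
      t k ⟨i + 1, by omega⟩ j = ∑ l : Fin r, t (k + 1) ⟨i, by omega⟩ l * blkA r (Lk k) l j) :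
    IsLowerGreenGenerators N r hNr p (fun k => blkQ r (Lk k)) (fun k => blkA r (Lk k))
      (Matrix.of fun i j : Fin r => t (N - r + 1) i j) A⁻¹ := by
  classical
  unfold IsLowerGreenGenerators
  obtain ⟨a, ha⟩ : ∃ a' : ℕ → Matrix (Fin r) (Fin r) ℂ,
      a' = fun m => blkA r (Lk m) := ⟨_, rfl⟩
  set Bm : ℕ → Matrix (Fin N) (Fin N) ℂ := LUAux.Bmat N r Lk Llast R with hBm
  clear_value Bm
  have hdet : IsUnit R.det := (Matrix.isUnit_iff_isUnit_det R).mp hR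
  have hRR : R * R⁻¹ = 1 := Matrix.mul_nonsing_inv R hdet
  have hRinvTri : ∀ i j : Fin N, (j : ℕ) < (i : ℕ) → R⁻¹ i j = 0 := by
    letI := hR.invertible
    exact fun i j hij =>
      Matrix.blockTriangular_inv_of_blockTriangular
        (M := R) (b := fun i : Fin N => (i : ℕ)) (fun i j h => hRtri i j h) hij
  have hdiag : ∀ d : Fin N, R d d * R⁻¹ d d = 1 := by
    intro d
    have h1 : (R * R⁻¹) d d = 1 := by rw [hRR, Matrix.one_apply_eq]
    rw [Matrix.mul_apply] at h1
    have h2 : ∑ l, R d l * R⁻¹ l d = R d d * R⁻¹ d d := by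
      refine Finset.sum_eq_single_of_mem d (Finset.mem_univ d) ?_
      intro l _ hl
      rcases lt_or_gt_of_ne (fun h => hl (Fin.ext h) : (l : ℕ) ≠ (d : ℕ)) with h | h
      · rw [hRtri d l h, zero_mul]
      · rw [hRinvTri l d h, mul_zero]
    rw [h2] at h1
    exact h1
  have hxne : ∀ d : Fin N, R d d ≠ 0 := fun d => left_ne_zero_of_mul_eq_one (hdiag d)
  -- column identity to the left of the active window
  have hBcol : ∀ (k : ℕ), k ≤ N - r + 1 → ∀ c : Fin N, (c : ℕ) + 1 < k →
      ∀ i, Bm k i c = R⁻¹ i c := by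
    intro k hk c hc i
    simp only [hBm, LUAux.Bmat]
    rw [Matrix.mul_apply]
    rw [Finset.sum_congr rfl (fun l _ => by rw [LUAux.Cmat_col Lk Llast k hk c hc l])]
    simp only [mul_ite, mul_one, mul_zero, Finset.sum_ite_eq', Finset.mem_univ, if_true]
  -- row relation
  have hRBrow : ∀ (k : ℕ), k ≤ N - r + 1 → ∀ i : Fin N, (i : ℕ) + 1 < k → ∀ c : Fin N,
      (∑ l, R i l * Bm k l c) = if i = c then 1 else 0 := by
    intro k hk i hi c
    have h1 : (∑ l, R i l * Bm k l c) = (R * Bm k) i c := (Matrix.mul_apply).symm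
    have h2 : R * Bm k = LUAux.Cmat N r Lk Llast k := by
      simp only [hBm, LUAux.Bmat]
      rw [← mul_assoc, hRR, one_mul]
    rw [h1, h2]
    exact LUAux.Cmat_row Lk Llast k hk i hi c
  -- one step of the product
  have hstep : ∀ (k : ℕ) (hk1 : 1 ≤ k) (hk2 : k ≤ N - r), ∀ (i c : Fin N) (cc : Fin (r + 1)),
      (c : ℕ) = k - 1 + (cc : ℕ) →
      Bm k i c = ∑ m : Fin (r + 1),
        Bm (k + 1) i ⟨k - 1 + (m : ℕ), by have := m.isLt; omega⟩ * Lk k m cc := by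
    intro k hk1 hk2 i c cc hc
    have hcc := cc.isLt
    simp only [hBm, LUAux.Bmat]
    rw [LUAux.Cmat_step Lk Llast k hk2, ← mul_assoc, Matrix.mul_apply]
    have hz : ∀ l : Fin N, (l : ℕ) < k - 1 ∨ (k - 1) + (r + 1) ≤ (l : ℕ) →
        (R⁻¹ * LUAux.Cmat N r Lk Llast (k + 1)) i l * embed N r k (Lk k) l c = 0 := by
      intro l hl
      have he : embed N r k (Lk k) l c = 0 := by
        unfold embed
        simp only [Matrix.of_apply]
        rw [dif_neg (by omega), if_neg (by omega)]
      rw [he, mul_zero]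
    rw [LUAux.sum_window _ (k - 1) (r + 1) (by omega) hz]
    refine Finset.sum_congr rfl fun m _ => ?_
    have hm := m.isLt
    congr 1
    unfold embed
    simp only [Matrix.of_apply]
    rw [dif_pos ⟨by omega, by omega, by omega, by omega⟩]
    have hx1 : (⟨k - 1 + (m : ℕ) - (k - 1), by omega⟩ : Fin (r + 1)) = m :=
      Fin.ext (show k - 1 + (m : ℕ) - (k - 1) = (m : ℕ) by omega)
    have hx2 : (⟨(c : ℕ) - (k - 1), by omega⟩ : Fin (r + 1)) = cc :=
      Fin.ext (show (c : ℕ) - (k - 1) = (cc : ℕ) by omega)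
    rw [hx1, hx2]
  -- column stability to the right of the window
  have hcolStable : ∀ (k : ℕ), 1 ≤ k → k ≤ N - r → ∀ (i c : Fin N), k + r ≤ (c : ℕ) →
      Bm k i c = Bm (k + 1) i c := by
    intro k hk1 hk2 i c hc
    simp only [hBm, LUAux.Bmat]
    rw [LUAux.Cmat_step Lk Llast k hk2, ← mul_assoc, Matrix.mul_apply]
    rw [Finset.sum_congr rfl
      (fun l _ => by rw [LUAux.embed_col_id k (Lk k) c (Or.inr hc) l])]
    simp only [mul_ite, mul_one, mul_zero, Finset.sum_ite_eq', Finset.mem_univ, if_true]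
  have hchain : ∀ (i c : Fin N) (dm : ℕ), 1 + dm + r ≤ (c : ℕ) + 1 → 1 + dm ≤ N - r + 1 →
      Bm 1 i c = Bm (1 + dm) i c := by
    intro i c dm
    induction dm with
    | zero => intro _ _; rfl
    | succ dm ih =>
      intro h1 h2
      rw [ih (by omega) (by omega), show 1 + (dm + 1) = (1 + dm) + 1 by omega]
      exact hcolStable (1 + dm) (by omega) (by omega) i c (by omega)
  -- ================= main downward induction =================
  have key : ∀ (d k : ℕ), k + d = N - r + 1 → 1 ≤ k →
      ((∀ (i c : Fin N) (ii : ℕ) (j : Fin r), ii = (i : ℕ) + 1 → k ≤ ii →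
          (i : ℕ) < N - r → (c : ℕ) = k - 1 + (j : ℕ) →
          Bm k i c = (p ii * aGT r a ii (k - 1)) 0 j)
        ∧ (∀ (i c : Fin N) (u j : Fin r), (i : ℕ) = N - r + (u : ℕ) →
            (c : ℕ) = k - 1 + (j : ℕ) →
            Bm k i c = (t (N - r + 1) * aGT r a (N - r + 1) (k - 1)) u j)
        ∧ (∀ (i c : Fin N) (u j : Fin r), (i : ℕ) = k - 1 + (u : ℕ) →
            (c : ℕ) = k - 1 + (j : ℕ) →
            t k u j = Bm k i c)) := by
    intro d
    induction d with
    | zero =>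
      intro k hk0 hk1
      have hkeq : k = N - r + 1 := by omega
      subst hkeq
      have hCtop : ∀ i c : Fin N,
          Bm (N - r + 1) i c = (R⁻¹ * embedLast N r Llast) i c := by
        intro i c
        simp only [hBm, LUAux.Bmat]
        rw [LUAux.Cmat_top]
      have hQ : ∀ u v : Fin r,
          (∑ m : Fin r, R ⟨N - r + (u : ℕ), by have := u.isLt; omega⟩
              ⟨N - r + (m : ℕ), by have := m.isLt; omega⟩ *
            R⁻¹ ⟨N - r + (m : ℕ), by have := m.isLt; omega⟩
              ⟨N - r + (v : ℕ), by have := v.isLt; omega⟩) = if u = v then 1 else 0 := by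
        intro u v
        have hu := u.isLt
        have hv := v.isLt
        have h1 : (R * R⁻¹) (⟨N - r + (u : ℕ), by omega⟩ : Fin N) ⟨N - r + (v : ℕ), by omega⟩
            = if u = v then 1 else 0 := by
          rw [hRR]
          rcases eq_or_ne u v with rfl | huv
          · rw [if_pos rfl]
            exact Matrix.one_apply_eq _
          · rw [if_neg huv]
            refine Matrix.one_apply_ne ?_
            intro h
            have h' : N - r + (u : ℕ) = N - r + (v : ℕ) := congrArg Fin.val h
            exact huv (Fin.ext (by omega))
        rw [Matrix.mul_apply] at h1
        rw [LUAux.sum_window _ (N - r) r (by omega) ?_] at h1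
        · exact h1
        · intro l hl
          rcases hl with hl | hl
          · rw [hRtri _ l (show (l : ℕ) < N - r + (u : ℕ) by omega), zero_mul]
          · exact absurd l.isLt (by omega)
      have hQinv : (Matrix.of fun i j : Fin r =>
            R ⟨N - r + (i : ℕ), by have := i.isLt; omega⟩
              ⟨N - r + (j : ℕ), by have := j.isLt; omega⟩)⁻¹
          = Matrix.of fun u m : Fin r =>
              R⁻¹ ⟨N - r + (u : ℕ), by have := u.isLt; omega⟩
                ⟨N - r + (m : ℕ), by have := m.isLt; omega⟩ := by
        refine Matrix.inv_eq_right_inv ?_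
        ext u v
        rw [Matrix.mul_apply]
        simp only [Matrix.of_apply]
        rw [hQ u v, Matrix.one_apply]
      have hbase : ∀ (i c : Fin N) (u j : Fin r), (i : ℕ) = N - r + (u : ℕ) →
          (c : ℕ) = N - r + (j : ℕ) → Bm (N - r + 1) i c = t (N - r + 1) u j := by
        intro i c u j hi hc
        have hu := u.isLt
        have hj := j.isLt
        rw [show i = (⟨N - r + (u : ℕ), by omega⟩ : Fin N) from Fin.ext hi]
        rw [htTop u j, hQinv, hCtop, Matrix.mul_apply, Matrix.mul_apply]
        have hz : ∀ l : Fin N, (l : ℕ) < N - r ∨ (N - r) + r ≤ (l : ℕ) →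
            R⁻¹ (⟨N - r + (u : ℕ), by omega⟩ : Fin N) l * embedLast N r Llast l c = 0 := by
          intro l hl
          rcases hl with hl | hl
          · have he : embedLast N r Llast l c = 0 := by
              unfold embedLast
              simp only [Matrix.of_apply]
              rw [dif_neg (by omega), if_neg (by omega)]
            rw [he, mul_zero]
          · exact absurd l.isLt (by omega)
        rw [LUAux.sum_window _ (N - r) r (by omega) hz]
        refine Finset.sum_congr rfl fun m _ => ?_
        have hm := m.isLt
        simp only [Matrix.of_apply]
        congr 1
        unfold embedLast
        simp only [Matrix.of_apply]
        rw [dif_pos ⟨by omega, by omega⟩]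
        have hx1 : (⟨N - r + (m : ℕ) - (N - r), by omega⟩ : Fin r) = m :=
          Fin.ext (show N - r + (m : ℕ) - (N - r) = (m : ℕ) by omega)
        have hx2 : (⟨(c : ℕ) - (N - r), by omega⟩ : Fin r) = j :=
          Fin.ext (show (c : ℕ) - (N - r) = (j : ℕ) by omega)
        rw [hx1, hx2]
      refine ⟨?_, ?_, ?_⟩
      · intro i c ii j hii hk hiN hc
        exfalso; omega
      · intro i c u j hi hc
        rw [LUAux.aGT_self a (N - r + 1) (N - r + 1 - 1) (by omega), mul_one]
        exact hbase i c u j hi (by omega)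
      · intro i c u j hi hc
        exact (hbase i c u j (by omega) (by omega)).symm
    | succ d ih =>
      intro k hk0 hk1
      have hk2 : k ≤ N - r := by omega
      obtain ⟨IH1, IH2, IH3⟩ := ih (k + 1) (by omega) (by omega)
      have e0 : (⟨k - 1 + ((0 : Fin (r + 1)) : ℕ), by
            simp only [Fin.val_zero]; omega⟩ : Fin N) = ⟨k - 1, by omega⟩ :=
        Fin.ext (by
          show k - 1 + ((0 : Fin (r + 1)) : ℕ) = k - 1
          simp only [Fin.val_zero]
          omega)
      have e1 : ∀ l : Fin r, (⟨k - 1 + ((Fin.succ l : Fin (r + 1)) : ℕ), by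
            have h1 : ((Fin.succ l : Fin (r + 1)) : ℕ) = (l : ℕ) + 1 := rfl
            have := l.isLt; omega⟩ : Fin N)
          = ⟨k + (l : ℕ), by have := l.isLt; omega⟩ := fun l =>
        Fin.ext (by show k - 1 + ((l : ℕ) + 1) = k + (l : ℕ); omega)
      -- x_k times the top row of B (k+1) in the window columns
      have htopval : ∀ (c : Fin N) (lc : Fin r), (c : ℕ) = k + (lc : ℕ) →
          R ⟨k - 1, by omega⟩ ⟨k - 1, by omega⟩
              * Bm (k + 1) ⟨k - 1, by omega⟩ c
            = -∑ τ : Fin r,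
                R ⟨k - 1, by omega⟩ ⟨k + (τ : ℕ), by have := τ.isLt; omega⟩
                  * t (k + 1) τ lc := by
        intro c lc hc
        have hlc := lc.isLt
        have h0 := hRBrow (k + 1) (by omega) ⟨k - 1, by omega⟩
          (show k - 1 + 1 < k + 1 by omega) c
        rw [if_neg (by
          intro h
          have h' : k - 1 = (c : ℕ) := congrArg Fin.val h
          omega)] at h0
        rw [LUAux.sum_window _ (k - 1) (r + 1) (by omega) (by
          intro l hl
          rcases hl with hl | hl
          · rw [hRtri _ l (show (l : ℕ) < k - 1 from hl), zero_mul]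
          · rw [hRband _ l (show k - 1 + r < (l : ℕ) by omega), zero_mul])] at h0
        rw [Fin.sum_univ_succ, e0] at h0
        simp only [e1] at h0
        have h2 : ∀ τ : Fin r,
            Bm (k + 1) (⟨k + (τ : ℕ), by have := τ.isLt; omega⟩ : Fin N) c
              = t (k + 1) τ lc := fun τ =>
          (IH3 ⟨k + (τ : ℕ), by have := τ.isLt; omega⟩ c τ lc
            (show k + (τ : ℕ) = k + 1 - 1 + (τ : ℕ) by omega)
            (show (c : ℕ) = k + 1 - 1 + (lc : ℕ) by omega)).symm
        simp only [h2] at h0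
        linear_combination h0
      -- the k-th row of B k in the window equals p k
      have hrowk : ∀ (c : Fin N) (j : Fin r), (c : ℕ) = k - 1 + (j : ℕ) →
          Bm k ⟨k - 1, by omega⟩ c = p k 0 j := by
        intro c j hc
        have hx := hxne ⟨k - 1, by omega⟩
        have hL : R ⟨k - 1, by omega⟩ ⟨k - 1, by omega⟩ * Bm k ⟨k - 1, by omega⟩ c
            = Lk k 0 j.castSucc
              - ∑ l : Fin r, (∑ τ : Fin r,
                  R ⟨k - 1, by omega⟩ ⟨k + (τ : ℕ), by have := τ.isLt; omega⟩
                    * t (k + 1) τ l)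
                * Lk k (Fin.succ l) j.castSucc := by
          rw [hstep k hk1 hk2 ⟨k - 1, by omega⟩ c j.castSucc
            (show (c : ℕ) = k - 1 + (j : ℕ) from hc)]
          rw [Fin.sum_univ_succ, e0]
          simp only [e1]
          rw [hBcol (k + 1) (by omega) ⟨k - 1, by omega⟩
            (show k - 1 + 1 < k + 1 by omega) ⟨k - 1, by omega⟩]
          rw [mul_add, ← mul_assoc, hdiag ⟨k - 1, by omega⟩, one_mul, Finset.mul_sum]
          have hterm : ∀ l : Fin r,
              R ⟨k - 1, by omega⟩ ⟨k - 1, by omega⟩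
                  * (Bm (k + 1) ⟨k - 1, by omega⟩ ⟨k + (l : ℕ), by have := l.isLt; omega⟩
                    * Lk k (Fin.succ l) j.castSucc)
                = -((∑ τ : Fin r,
                      R ⟨k - 1, by omega⟩ ⟨k + (τ : ℕ), by have := τ.isLt; omega⟩
                        * t (k + 1) τ l)
                    * Lk k (Fin.succ l) j.castSucc) := by
            intro l
            rw [← mul_assoc,
              htopval ⟨k + (l : ℕ), by have := l.isLt; omega⟩ l rfl, neg_mul]
          simp only [hterm]
          rw [Finset.sum_neg_distrib, ← sub_eq_add_neg]
        have hRp : R ⟨k - 1, by omega⟩ ⟨k - 1, by omega⟩ * p k 0 j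
            = Lk k 0 j.castSucc
              - ∑ τ : Fin r, ∑ l : Fin r,
                  R ⟨k - 1, by omega⟩ ⟨k + (τ : ℕ), by have := τ.isLt; omega⟩
                    * t (k + 1) τ l * Lk k (Fin.succ l) j.castSucc := by
          rw [hp k hk1 hk2 j, ← mul_assoc, mul_one_div, div_self hx, one_mul]
          simp only [blkP, blkA, Matrix.of_apply]
        refine mul_left_cancel₀ hx ?_
        rw [hL, hRp]
        congr 1
        rw [Finset.sum_comm]
        exact Finset.sum_congr rfl fun l _ => Finset.sum_mul _ _ _
      -- rows weakly below k+1
      have hlow : ∀ (i c : Fin N) (j : Fin r), k ≤ (i : ℕ) → (c : ℕ) = k - 1 + (j : ℕ) →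
          Bm k i c = ∑ l : Fin r,
            Bm (k + 1) i ⟨k + (l : ℕ), by have := l.isLt; omega⟩ * a k l j := by
        intro i c j hik hc
        rw [hstep k hk1 hk2 i c j.castSucc (show (c : ℕ) = k - 1 + (j : ℕ) from hc)]
        rw [Fin.sum_univ_succ, e0]
        simp only [e1]
        rw [hBcol (k + 1) (by omega) ⟨k - 1, by omega⟩
          (show k - 1 + 1 < k + 1 by omega) i]
        rw [hRinvTri i ⟨k - 1, by omega⟩ (show k - 1 < (i : ℕ) by omega), zero_mul, zero_add]
        have hA : ∀ l : Fin r, a k l j = Lk k (Fin.succ l) j.castSucc := fun l => by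
          simp only [ha, blkA, Matrix.of_apply]
        exact Finset.sum_congr rfl fun l _ => by rw [hA l]
      have hkm1 : k - 1 + 1 = k := by omega
      refine ⟨?_, ?_, ?_⟩
      · -- conjunct 1
        intro i c ii j hii hk hiN hc
        subst hii
        rcases eq_or_lt_of_le hk with heq | hlt
        · -- row k
          rw [show (i : ℕ) + 1 = k from heq.symm,
            LUAux.aGT_self a k (k - 1) (by omega), Matrix.mul_one]
          rw [show i = (⟨k - 1, by omega⟩ : Fin N) from
            Fin.ext (show (i : ℕ) = k - 1 by omega)]
          exact hrowk c j hc
        · -- rows below k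
          rw [hlow i c j (by omega) hc]
          have hent : ∀ l : Fin r,
              Bm (k + 1) i ⟨k + (l : ℕ), by have := l.isLt; omega⟩
                = (p ((i : ℕ) + 1) * aGT r a ((i : ℕ) + 1) (k + 1 - 1)) 0 l := fun l =>
            IH1 i ⟨k + (l : ℕ), by have := l.isLt; omega⟩ ((i : ℕ) + 1) l rfl
              (by omega) hiN (show k + (l : ℕ) = k + 1 - 1 + (l : ℕ) by omega)
          simp only [hent]
          rw [LUAux.aGT_step a ((i : ℕ) + 1) (k - 1) (by omega), hkm1, ← Matrix.mul_assoc]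
          exact (Matrix.mul_apply).symm
      · -- conjunct 2
        intro i c u j hi hc
        rw [hlow i c j (by omega) hc]
        have hent : ∀ l : Fin r,
            Bm (k + 1) i ⟨k + (l : ℕ), by have := l.isLt; omega⟩
              = (t (N - r + 1) * aGT r a (N - r + 1) (k + 1 - 1)) u l := fun l =>
          IH2 i ⟨k + (l : ℕ), by have := l.isLt; omega⟩ u l hi
            (show k + (l : ℕ) = k + 1 - 1 + (l : ℕ) by omega)
        simp only [hent]
        rw [LUAux.aGT_step a (N - r + 1) (k - 1) (by omega), hkm1, ← Matrix.mul_assoc]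
        exact (Matrix.mul_apply).symm
      · -- conjunct 3
        intro i c u j hi hc
        rcases Nat.eq_zero_or_pos (u : ℕ) with hu0 | hupos
        · rw [show u = (⟨0, by omega⟩ : Fin r) from Fin.ext hu0, htFirst k hk1 hk2 j]
          rw [show i = (⟨k - 1, by omega⟩ : Fin N) from
            Fin.ext (show (i : ℕ) = k - 1 by omega)]
          exact (hrowk c j hc).symm
        · obtain ⟨u0, hu0⟩ : ∃ u0, (u : ℕ) = u0 + 1 := ⟨(u : ℕ) - 1, by omega⟩
          have hu0r : u0 < r - 1 := by have := u.isLt; omega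
          rw [show u = (⟨u0 + 1, by have := u.isLt; omega⟩ : Fin r) from Fin.ext hu0,
            htRec k hk1 hk2 u0 hu0r j]
          rw [hlow i c j (by omega) hc]
          refine Finset.sum_congr rfl fun l _ => ?_
          have hA : a k l j = blkA r (Lk k) l j := by rw [ha]
          rw [hA]
          congr 1
          exact IH3 i ⟨k + (l : ℕ), by have := l.isLt; omega⟩
            ⟨u0, by have := u.isLt; omega⟩ l
            (show (i : ℕ) = k + 1 - 1 + u0 by omega)
            (show k + (l : ℕ) = k + 1 - 1 + (l : ℕ) by omega)
  -- ================= assembly =================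
  have hAinv : A⁻¹ = Bm 1 := by
    simp only [hBm, LUAux.Bmat]
    rw [hALR, Matrix.mul_inv_rev, hfac, LUAux.Cmat_one]
  obtain ⟨K1, K2, K3⟩ := key (N - r) 1 (by omega) le_rfl
  refine ⟨?_, ?_, ?_, ?_⟩
  · -- first block columns, rows 1..N-r
    intro i hi1 hi2 j
    rw [hAinv]
    have h := K1 ⟨i - 1, by omega⟩ ⟨(j : ℕ), by have := j.isLt; omega⟩ i j
      (show i = i - 1 + 1 by omega) (by omega) (show i - 1 < N - r by omega)
      (show (j : ℕ) = 1 - 1 + (j : ℕ) by omega)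
    rw [ha] at h
    exact h
  · -- strip columns, rows 1..N-r
    intro i hi1 hi2 s hs1 hs2
    rw [hAinv]
    obtain ⟨S1, _S2, _S3⟩ := key (N - r + 1 - s) s (by omega) (by omega)
    have hstrip : Bm 1 (⟨i - 1, by omega⟩ : Fin N) (⟨r + s - 2, by omega⟩ : Fin N)
        = Bm (s - 1) ⟨i - 1, by omega⟩ ⟨r + s - 2, by omega⟩ := by
      have h := hchain ⟨i - 1, by omega⟩ ⟨r + s - 2, by omega⟩ (s - 2)
        (show 1 + (s - 2) + r ≤ r + s - 2 + 1 by omega) (by omega)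
      rw [show 1 + (s - 2) = s - 1 by omega] at h
      exact h
    rw [hstrip, hstep (s - 1) (by omega) (by omega) ⟨i - 1, by omega⟩
      ⟨r + s - 2, by omega⟩ (Fin.last r) (show r + s - 2 = s - 1 - 1 + r by omega)]
    rw [show s - 1 + 1 = s by omega]
    rw [Fin.sum_univ_succ]
    have e0s : (⟨s - 1 - 1 + ((0 : Fin (r + 1)) : ℕ), by
          simp only [Fin.val_zero]; omega⟩ : Fin N) = ⟨s - 2, by omega⟩ :=
      Fin.ext (by
        show s - 1 - 1 + ((0 : Fin (r + 1)) : ℕ) = s - 2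
        simp only [Fin.val_zero]
        omega)
    have e1s : ∀ l : Fin r, (⟨s - 1 - 1 + ((Fin.succ l : Fin (r + 1)) : ℕ), by
          have h1 : ((Fin.succ l : Fin (r + 1)) : ℕ) = (l : ℕ) + 1 := rfl
          have := l.isLt; omega⟩ : Fin N)
        = ⟨s - 1 + (l : ℕ), by have := l.isLt; omega⟩ := fun l =>
      Fin.ext (by show s - 1 - 1 + ((l : ℕ) + 1) = s - 1 + (l : ℕ); omega)
    rw [e0s]
    simp only [e1s]
    rw [hBcol s (by omega) ⟨s - 2, by omega⟩ (show s - 2 + 1 < s by omega) ⟨i - 1, by omega⟩]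
    rw [hRinvTri ⟨i - 1, by omega⟩ ⟨s - 2, by omega⟩ (show s - 2 < i - 1 by omega),
      zero_mul, zero_add]
    have hent : ∀ l : Fin r,
        Bm s (⟨i - 1, by omega⟩ : Fin N) ⟨s - 1 + (l : ℕ), by have := l.isLt; omega⟩
          = (p i * aGT r a i (s - 1)) 0 l := fun l =>
      S1 ⟨i - 1, by omega⟩ ⟨s - 1 + (l : ℕ), by have := l.isLt; omega⟩ i l
        (show i = i - 1 + 1 by omega) (by omega) (show i - 1 < N - r by omega) rfl
    simp only [hent]
    rw [← ha]
    exact (Matrix.mul_apply).symm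
  · -- first block columns, bottom rows
    intro u j
    rw [hAinv]
    have h := K2 ⟨N - r + (u : ℕ), by have := u.isLt; omega⟩
      ⟨(j : ℕ), by have := j.isLt; omega⟩ u j rfl
      (show (j : ℕ) = 1 - 1 + (j : ℕ) by omega)
    rw [ha] at h
    exact h
  · -- strip columns, bottom rows
    intro u s hs1 hs2
    rw [hAinv]
    obtain ⟨_S1, S2, _S3⟩ := key (N - r + 1 - s) s (by omega) (by omega)
    have hu := u.isLt
    have hstrip : Bm 1 (⟨N - r + (u : ℕ), by omega⟩ : Fin N)
          (⟨r + s - 2, by omega⟩ : Fin N)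
        = Bm (s - 1) ⟨N - r + (u : ℕ), by omega⟩ ⟨r + s - 2, by omega⟩ := by
      have h := hchain ⟨N - r + (u : ℕ), by omega⟩ ⟨r + s - 2, by omega⟩ (s - 2)
        (show 1 + (s - 2) + r ≤ r + s - 2 + 1 by omega) (by omega)
      rw [show 1 + (s - 2) = s - 1 by omega] at h
      exact h
    rw [hstrip, hstep (s - 1) (by omega) (by omega) ⟨N - r + (u : ℕ), by omega⟩
      ⟨r + s - 2, by omega⟩ (Fin.last r) (show r + s - 2 = s - 1 - 1 + r by omega)]
    rw [show s - 1 + 1 = s by omega]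
    rw [Fin.sum_univ_succ]
    have e0s : (⟨s - 1 - 1 + ((0 : Fin (r + 1)) : ℕ), by
          simp only [Fin.val_zero]; omega⟩ : Fin N) = ⟨s - 2, by omega⟩ :=
      Fin.ext (by
        show s - 1 - 1 + ((0 : Fin (r + 1)) : ℕ) = s - 2
        simp only [Fin.val_zero]
        omega)
    have e1s : ∀ l : Fin r, (⟨s - 1 - 1 + ((Fin.succ l : Fin (r + 1)) : ℕ), by
          have h1 : ((Fin.succ l : Fin (r + 1)) : ℕ) = (l : ℕ) + 1 := rfl
          have := l.isLt; omega⟩ : Fin N)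
        = ⟨s - 1 + (l : ℕ), by have := l.isLt; omega⟩ := fun l =>
      Fin.ext (by show s - 1 - 1 + ((l : ℕ) + 1) = s - 1 + (l : ℕ); omega)
    rw [e0s]
    simp only [e1s]
    rw [hBcol s (by omega) ⟨s - 2, by omega⟩ (show s - 2 + 1 < s by omega)
      ⟨N - r + (u : ℕ), by omega⟩]
    rw [hRinvTri ⟨N - r + (u : ℕ), by omega⟩ ⟨s - 2, by omega⟩
      (show s - 2 < N - r + (u : ℕ) by omega), zero_mul, zero_add]
    have hent : ∀ l : Fin r,
        Bm s (⟨N - r + (u : ℕ), by omega⟩ : Fin N)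
            ⟨s - 1 + (l : ℕ), by have := l.isLt; omega⟩
          = (t (N - r + 1) * aGT r a (N - r + 1) (s - 1)) u l := fun l =>
      S2 ⟨N - r + (u : ℕ), by omega⟩ ⟨s - 1 + (l : ℕ), by have := l.isLt; omega⟩ u l rfl rfl
    simp only [hent]
    rw [← ha]
    exact (Matrix.mul_apply).symm
end
end
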